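/- For n ≥ 2, the residue at w = 0 of (1+w)^n / (w^{n-1}(1+nw)) equals (n² − 1 + (1−n)^n) / n². -/

import Mathlib

open PowerSeries

/-- For `n ≥ 2`, the residue at `w = 0` of
`(1+w)^n / (w^{n-1}(1+nw))`, i.e. the coefficient of `w^{n-2}` in the power series
expansion of `(1+w)^n/(1+nw)`, equals `(n² − 1 + (1−n)^n)/n²`. -/
theorem residue_eps0_hypersurface (n : ℕ) (hn : 2 ≤ n) :
    PowerSeries.coeff (R := ℚ) (n - 2)
        ((1 + PowerSeries.X) ^ n * (1 + PowerSeries.C (R := ℚ) (n : ℚ) * PowerSeries.X)⁻¹)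
      = ((n : ℚ) ^ 2 - 1 + (1 - (n : ℚ)) ^ n) / (n : ℚ) ^ 2 := by
  obtain ⟨m, rfl⟩ : ∃ m, n = m + 2 := ⟨n - 2, by omega⟩
  set c : ℚ := ((m + 2 : ℕ) : ℚ) with hc
  have hc0 : c ≠ 0 := by
    rw [hc]
    exact_mod_cast Nat.succ_ne_zero (m + 1)
  -- the inverse series
  have hinv : (1 + PowerSeries.C (R := ℚ) c * PowerSeries.X)⁻¹
      = PowerSeries.mk fun k => (-c) ^ k := by
    rw [PowerSeries.inv_eq_iff_mul_eq_one (by simp)]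
    ext j
    rw [mul_add, mul_one, mul_left_comm]
    cases j with
    | zero => simp
    | succ i =>
      rw [map_add, coeff_C_mul, coeff_succ_mul_X, coeff_mk, coeff_mk, coeff_one]
      simp [pow_succ]
      ring
  -- coefficients of (1+X)^n
  have hbin : ∀ k : ℕ, PowerSeries.coeff (R := ℚ) k ((1 + PowerSeries.X) ^ (m + 2))
      = ((m + 2).choose k : ℚ) := by
    intro k
    have : (((1 + Polynomial.X : Polynomial ℚ) ^ (m + 2) : Polynomial ℚ) : ℚ⟦X⟧)
        = (1 + PowerSeries.X) ^ (m + 2) := by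
      rw [Polynomial.coe_pow, Polynomial.coe_add, Polynomial.coe_one, Polynomial.coe_X]
    rw [← this, Polynomial.coeff_coe, Polynomial.coeff_one_add_X_pow]
  have hsub : m + 2 - 2 = m := by omega
  rw [hsub, hinv, PowerSeries.coeff_mul,
    Finset.Nat.sum_antidiagonal_eq_sum_range_succ (fun a b =>
      PowerSeries.coeff (R := ℚ) a ((1 + PowerSeries.X) ^ (m + 2)) * PowerSeries.coeff (R := ℚ) b
        (PowerSeries.mk fun k => (-c) ^ k))]
  simp only [coeff_mk, hbin]
  -- now a finite sum identity
  have hbinom : (1 - c) ^ (m + 2)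
      = ∑ k ∈ Finset.range (m + 3), ((m + 2).choose k : ℚ) * (-c) ^ (m + 2 - k) := by
    have := add_pow (1 : ℚ) (-c) (m + 2)
    simp only [one_pow, one_mul] at this
    rw [show (1 : ℚ) - c = 1 + -c by ring, this]
    exact Finset.sum_congr rfl fun k _ => by ring
  rw [Finset.sum_range_succ, Finset.sum_range_succ] at hbinom
  have hmain : ∑ k ∈ Finset.range (m + 1), ((m + 2).choose k : ℚ) * (-c) ^ (m + 2 - k)
      = c ^ 2 * ∑ k ∈ Finset.range (m + 1), ((m + 2).choose k : ℚ) * (-c) ^ (m - k) := by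
    rw [Finset.mul_sum]
    refine Finset.sum_congr rfl fun k hk => ?_
    have hk' : k ≤ m := by simpa [Nat.lt_succ_iff] using hk
    have : m + 2 - k = (m - k) + 2 := by omega
    rw [this, pow_add]
    ring
  rw [hmain] at hbinom
  simp only [Nat.choose_succ_self_right, Nat.choose_self, Nat.sub_self,
    Nat.add_sub_cancel_left] at hbinom
  rw [show m + 2 - (m + 1) = 1 by omega] at hbinom
  rw [eq_div_iff (pow_ne_zero 2 hc0)]
  simp only [hc] at hbinom ⊢
  push_cast at hbinom ⊢
  linear_combination -hbinom
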